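/- arXiv:1604.03154 — 2 statements merged into one kernel-verified Lean document; each statement's English description precedes it below -/
import Mathlib

section
/- Let X be a preordered Banach space. Then the unit ball X^{**1} of the bidual is d-complete, and for every d-Cauchy net (x_λ) in X^{**1} and every x ∈ X^{**}: x_λ →^◦_◦ x (holes tested against all points of X^{**}) if and only if x_λ(φ) → x(φ) for every φ ∈ Q. -/
open TopologicalSpace ENNReal

/-- A (possibly non-reflexive) transitive relation, used to index nets. -/
def TransRel {ι : Type} (r : ι → ι → Prop) : Prop := ∀ a b c, r a b → r b c → r a c

/-- Directedness of the index relation of a net. -/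
def DirRel {ι : Type} (r : ι → ι → Prop) : Prop := ∀ a b, ∃ c, r a c ∧ r b c

/-- `liminf` of a net of extended nonnegative reals over a directed index:
`sup_γ inf_{γ ≺ δ} a δ`. -/
noncomputable def liminfN {ι : Type} (r : ι → ι → Prop) (a : ι → ℝ≥0∞) : ℝ≥0∞ :=
  ⨆ γ, ⨅ δ, ⨅ _ : r γ δ, a δ

/-- `limsup` of a net of extended nonnegative reals over a directed index:
`inf_γ sup_{γ ≺ δ} a δ`. -/
noncomputable def limsupN {ι : Type} (r : ι → ι → Prop) (a : ι → ℝ≥0∞) : ℝ≥0∞ :=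
  ⨅ γ, ⨆ δ, ⨆ _ : r γ δ, a δ

/-- Convergence of a net in `ℝ≥0∞` to `L`. -/
def TendstoN {ι : Type} (r : ι → ι → Prop) (a : ι → ℝ≥0∞) (L : ℝ≥0∞) : Prop :=
  liminfN r a = L ∧ limsupN r a = L

/-- Convergence of a real-valued net. -/
def TendstoRN {ι : Type} (r : ι → ι → Prop) (a : ι → ℝ) (L : ℝ) : Prop :=
  ∀ ε : ℝ, 0 < ε → ∃ γ₀, ∀ γ, r γ₀ γ → |a γ - L| < ε

/-- A distance: a `[0,∞]`-valued function satisfying the triangle inequality. -/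
def IsDistance {X : Type} (d : X → X → ℝ≥0∞) : Prop :=
  ∀ x y z, d x z ≤ d x y + d y z

/-- `d`-Cauchy net: `lim_γ sup_{γ ≺ δ} d(x_γ, x_δ) = 0`. -/
def DCauchyN {ι X : Type} (r : ι → ι → Prop) (d : X → X → ℝ≥0∞) (x : ι → X) : Prop :=
  ∀ ε : ℝ≥0∞, 0 < ε → ∃ γ₀, ∀ γ δ, r γ₀ γ → r γ δ → d (x γ) (x δ) < ε

/-- `d`-dominating net: `sup_γ lim_{γ ≺ δ} d(x_γ, x_δ) = 0`. -/
def DDomN {ι X : Type} (r : ι → ι → Prop) (d : X → X → ℝ≥0∞) (x : ι → X) : Prop :=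
  ∀ γ, ∀ ε : ℝ≥0∞, 0 < ε → ∃ δ₀, r γ δ₀ ∧ ∀ δ, r δ₀ δ → d (x γ) (x δ) < ε

/-- `x_λ →^◦ l` with holes tested against points of `T`:
`liminf_λ d(x_λ, c) ≥ d(l, c)` for all `c ∈ T`. -/
def UpperConvOn {ι X : Type} (r : ι → ι → Prop) (d : X → X → ℝ≥0∞) (T : Set X)
    (x : ι → X) (l : X) : Prop :=
  ∀ c ∈ T, d l c ≤ liminfN r fun γ => d (x γ) c

/-- `x_λ →_◦ l` with holes tested against points of `T`:
`liminf_λ d(c, x_λ) ≥ d(c, l)` for all `c ∈ T`. -/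
def LowerConvOn {ι X : Type} (r : ι → ι → Prop) (d : X → X → ℝ≥0∞) (T : Set X)
    (x : ι → X) (l : X) : Prop :=
  ∀ c ∈ T, d c l ≤ liminfN r fun γ => d c (x γ)

/-- `x_λ →^◦_◦ l` with holes tested against points of `T`. -/
def BiConvOn {ι X : Type} (r : ι → ι → Prop) (d : X → X → ℝ≥0∞) (T : Set X)
    (x : ι → X) (l : X) : Prop :=
  UpperConvOn r d T x l ∧ LowerConvOn r d T x l

/-- The supremum distance on functions `Q → X`. -/
noncomputable def supD {Q X : Type} (d : X → X → ℝ≥0∞) (f g : Q → X) : ℝ≥0∞ :=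
  ⨆ p, d (f p) (g p)

/-- The upper ball topology `X^•`, generated by the balls `{x | d c x < ε}`. -/
def upperBallTop {X : Type} (d : X → X → ℝ≥0∞) : TopologicalSpace X :=
  TopologicalSpace.generateFrom {s | ∃ c, ∃ ε : ℝ≥0∞, 0 < ε ∧ s = {x | d c x < ε}}

/-- The lower ball topology `X_•`, generated by the balls `{x | d x c < ε}`. -/
def lowerBallTop {X : Type} (d : X → X → ℝ≥0∞) : TopologicalSpace X :=
  TopologicalSpace.generateFrom {s | ∃ c, ∃ ε : ℝ≥0∞, 0 < ε ∧ s = {x | d x c < ε}}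

/-- `X` is `d`-complete: every `d`-Cauchy net has a `→^◦_◦`-limit. -/
def DComplete {X : Type} (d : X → X → ℝ≥0∞) : Prop :=
  ∀ (ι : Type) (r : ι → ι → Prop) (x : ι → X), Nonempty ι → TransRel r → DirRel r →
    DCauchyN r d x → ∃ l, BiConvOn r d Set.univ x l

/-- `y` is `d`-finite: `d(y, x_λ) → d(y, l)` whenever `(x_λ)` is `d`-Cauchy and
`x_λ →^◦_◦ l`. -/
def DFinite {X : Type} (d : X → X → ℝ≥0∞) (y : X) : Prop :=
  ∀ (ι : Type) (r : ι → ι → Prop) (x : ι → X) (l : X), Nonempty ι → TransRel r → DirRel r →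
    DCauchyN r d x → BiConvOn r d Set.univ x l →
      TendstoN r (fun γ => d y (x γ)) (d y l)

/-- The `d`-finite topology `X^{F•}`, generated by upper balls with `d`-finite centres. -/
def dFiniteTop {X : Type} (d : X → X → ℝ≥0∞) : TopologicalSpace X :=
  TopologicalSpace.generateFrom
    {s | ∃ c, DFinite d c ∧ ∃ ε : ℝ≥0∞, 0 < ε ∧ s = {x | d c x < ε}}

-- (base defs assumed above in real files)
/-- The bidual `X**` of a real normed space. -/
abbrev Bidual (X : Type) [NormedAddCommGroup X] [NormedSpace ℝ X] : Type :=
  StrongDual ℝ (StrongDual ℝ X)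

/-- The positive cone of a preordered Banach space: a norm-closed set containing `0`,
closed under nonnegative scaling and addition. -/
def IsGoodCone (X : Type) [NormedAddCommGroup X] [NormedSpace ℝ X] (K : Set X) : Prop :=
  IsClosed K ∧ (0 : X) ∈ K ∧ (∀ r : ℝ, 0 ≤ r → ∀ x ∈ K, r • x ∈ K) ∧
    ∀ x ∈ K, ∀ y ∈ K, x + y ∈ K

/-- `Q = X^{*1}_+`, the positive unit ball of the dual. -/
def posQ (X : Type) [NormedAddCommGroup X] [NormedSpace ℝ X] (K : Set X) :
    Set (StrongDual ℝ X) :=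
  {φ | ‖φ‖ ≤ 1 ∧ ∀ v ∈ K, 0 ≤ φ v}

/-- The canonical hemimetric on `X**`: `d(x,y) = ‖x - y‖_≤ = sup_{φ ∈ Q} φ(x - y)`. -/
noncomputable def ddist {X : Type} [NormedAddCommGroup X] [NormedSpace ℝ X] (K : Set X)
    (x y : Bidual X) : ℝ≥0∞ :=
  ⨆ φ ∈ posQ X K, ENNReal.ofReal ((x - y) φ)

/-- The weak* topology on `Q = X^{*1}_+`. -/
def qTop (X : Type) [NormedAddCommGroup X] [NormedSpace ℝ X] (K : Set X) :
    TopologicalSpace (posQ X K) :=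
  TopologicalSpace.induced (fun φ : posQ X K => fun v : X => φ.1 v) inferInstance

/-- `x ∈ X^S`: the restriction of `x ∈ X**` to `Q` is weak* lower semicontinuous. -/
def lscS {X : Type} [NormedAddCommGroup X] [NormedSpace ℝ X] (K : Set X)
    (x : Bidual X) : Prop :=
  @LowerSemicontinuous (posQ X K) ℝ (qTop X K) _ fun φ => x φ.1

/-- `B^{<∞}`: the bounded functions `Q → X**`. -/
def Bset (X : Type) [NormedAddCommGroup X] [NormedSpace ℝ X] (Q : Type) :
    Set (Q → Bidual X) := {f | ∃ M, ∀ p, ‖f p‖ ≤ M}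

/-- The upper ball topology on `X^S`, generated by the balls
`{y | d(c, y) < ε}` for `c ∈ X^S`. -/
def upTopXS {X : Type} [NormedAddCommGroup X] [NormedSpace ℝ X] (K : Set X) :
    TopologicalSpace {x : Bidual X // lscS K x} :=
  TopologicalSpace.generateFrom
    {s | ∃ c : {x : Bidual X // lscS K x}, ∃ ε : ℝ≥0∞, 0 < ε ∧ s = {y | ddist K c.1 y.1 < ε}}

/-- `f ∈ S`: a bounded function `Q → X**` taking values in `X^S` that is continuous
into `X^S` with its upper ball topology. -/
def MemS {X : Type} [NormedAddCommGroup X] [NormedSpace ℝ X] (K : Set X)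
    {Q : Type} [TopologicalSpace Q] (f : Q → Bidual X) : Prop :=
  f ∈ Bset X Q ∧ ∃ h : ∀ p, lscS K (f p),
    @Continuous Q {x : Bidual X // lscS K x} _ (upTopXS K) fun p => ⟨f p, h p⟩

section Stmt5Aux

open Filter

variable {ι : Type} {r : ι → ι → Prop}

/-- The filter of tails of a net indexed by `(ι, r)`. -/
def tailsF (r : ι → ι → Prop) : Filter ι := ⨅ γ, Filter.principal {δ | r γ δ}

lemma mem_tailsF [Nonempty ι] (ht : TransRel r) (hd : DirRel r) {s : Set ι} :
    s ∈ tailsF r ↔ ∃ γ, ∀ δ, r γ δ → δ ∈ s := by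
  rw [tailsF, Filter.mem_iInf_of_directed]
  · simp only [Filter.mem_principal, Set.subset_def, Set.mem_setOf_eq]
  · intro a b
    obtain ⟨c, hac, hbc⟩ := hd a b
    exact ⟨c, Filter.principal_mono.2 fun δ hδ => ht a c δ hac hδ,
      Filter.principal_mono.2 fun δ hδ => ht b c δ hbc hδ⟩

lemma tailsF_neBot [Nonempty ι] (ht : TransRel r) (hd : DirRel r) : (tailsF r).NeBot := by
  rw [Filter.neBot_iff]
  intro h
  have h0 : (∅ : Set ι) ∈ tailsF r := by rw [h]; exact Filter.mem_bot
  obtain ⟨γ, hγ⟩ := (mem_tailsF ht hd).1 h0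
  obtain ⟨δ, hδ, -⟩ := hd γ γ
  exact hγ δ hδ

lemma liminfN_mono {a b : ι → ℝ≥0∞} (h : ∀ γ, a γ ≤ b γ) : liminfN r a ≤ liminfN r b :=
  iSup_mono fun γ => iInf_mono fun δ => iInf_mono' fun hδ => ⟨hδ, h δ⟩

lemma le_liminfN {a : ι → ℝ≥0∞} {c : ℝ≥0∞} (γ₀ : ι) (h : ∀ δ, r γ₀ δ → c ≤ a δ) :
    c ≤ liminfN r a :=
  le_iSup_of_le γ₀ (le_iInf fun δ => le_iInf fun hδ => h δ hδ)

lemma liminfN_le {a : ι → ℝ≥0∞} {c : ℝ≥0∞} (h : ∀ γ, ∃ δ, r γ δ ∧ a δ ≤ c) :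
    liminfN r a ≤ c :=
  iSup_le fun γ => by
    obtain ⟨δ, h1, h2⟩ := h γ
    exact le_trans (iInf_le_of_le δ (iInf_le_of_le h1 le_rfl)) h2

variable {X : Type} [NormedAddCommGroup X] [NormedSpace ℝ X] {K : Set X}

lemma ofReal_apply_le_ddist {φ : StrongDual ℝ X} (hφ : φ ∈ posQ X K)
    (x y : Bidual X) : ENNReal.ofReal ((x - y) φ) ≤ ddist K x y :=
  le_iSup₂ (f := fun φ (_ : φ ∈ posQ X K) => ENNReal.ofReal ((x - y) φ)) φ hφ

lemma ddist_le_ofReal {x y : Bidual X} {ε : ℝ}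
    (h : ∀ φ ∈ posQ X K, (x - y) φ ≤ ε) : ddist K x y ≤ ENNReal.ofReal ε :=
  iSup₂_le fun φ hφ => ENNReal.ofReal_le_ofReal (h φ hφ)

lemma apply_le_of_ddist_le {x y : Bidual X} {ε : ℝ} (hε : 0 ≤ ε)
    (h : ddist K x y ≤ ENNReal.ofReal ε) {φ : StrongDual ℝ X}
    (hφ : φ ∈ posQ X K) : x φ - y φ ≤ ε := by
  have h1 := le_trans (ofReal_apply_le_ddist hφ x y) h
  rw [ENNReal.ofReal_le_ofReal_iff hε] at h1
  simpa using h1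

lemma apply_lt_of_ddist_lt {x y : Bidual X} {ε : ℝ} (hε : 0 < ε)
    (h : ddist K x y < ENNReal.ofReal ε) {φ : StrongDual ℝ X}
    (hφ : φ ∈ posQ X K) : x φ - y φ < ε := by
  have h1 := lt_of_le_of_lt (ofReal_apply_le_ddist hφ x y) h
  rw [ENNReal.ofReal_lt_ofReal_iff hε] at h1
  simpa using h1

/-- Lemma A: pointwise convergence on `Q` implies bi-convergence. -/
lemma biConv_of_ptwise {x : ι → Bidual X} {l : Bidual X}
    (h : ∀ φ ∈ posQ X K, TendstoRN r (fun i => x i φ) (l φ)) :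
    BiConvOn r (ddist K) Set.univ x l := by
  constructor
  · intro c _
    refine iSup₂_le fun φ hφ => ?_
    refine le_trans ?_ (liminfN_mono fun γ => ofReal_apply_le_ddist hφ (x γ) c)
    refine ENNReal.le_of_forall_pos_le_add fun ε hε _ => ?_
    have hε' : (0 : ℝ) < ε := hε
    obtain ⟨γ₀, h0⟩ := h φ hφ ε hε'
    calc ENNReal.ofReal ((l - c) φ)
        = ENNReal.ofReal (((l - c) φ - ε) + ε) := by ring_nf
      _ ≤ ENNReal.ofReal ((l - c) φ - ε) + ENNReal.ofReal (ε : ℝ) := ENNReal.ofReal_add_le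
      _ = ENNReal.ofReal ((l - c) φ - ε) + ε := by rw [ENNReal.ofReal_coe_nnreal]
      _ ≤ (liminfN r fun γ => ENNReal.ofReal ((x γ - c) φ)) + ε := by
          refine add_le_add_left (le_liminfN γ₀ fun δ hδ => ?_) _
          refine ENNReal.ofReal_le_ofReal ?_
          have h1 := h0 δ hδ
          rw [abs_lt] at h1
          simp only [ContinuousLinearMap.sub_apply] at *
          linarith [h1.1, h1.2]
  · intro c _
    refine iSup₂_le fun φ hφ => ?_
    refine le_trans ?_ (liminfN_mono fun γ => ofReal_apply_le_ddist hφ c (x γ))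
    refine ENNReal.le_of_forall_pos_le_add fun ε hε _ => ?_
    have hε' : (0 : ℝ) < ε := hε
    obtain ⟨γ₀, h0⟩ := h φ hφ ε hε'
    calc ENNReal.ofReal ((c - l) φ)
        = ENNReal.ofReal (((c - l) φ - ε) + ε) := by ring_nf
      _ ≤ ENNReal.ofReal ((c - l) φ - ε) + ENNReal.ofReal (ε : ℝ) := ENNReal.ofReal_add_le
      _ = ENNReal.ofReal ((c - l) φ - ε) + ε := by rw [ENNReal.ofReal_coe_nnreal]
      _ ≤ (liminfN r fun γ => ENNReal.ofReal ((c - x γ) φ)) + ε := by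
          refine add_le_add_left (le_liminfN γ₀ fun δ hδ => ?_) _
          refine ENNReal.ofReal_le_ofReal ?_
          have h1 := h0 δ hδ
          rw [abs_lt] at h1
          simp only [ContinuousLinearMap.sub_apply] at *
          linarith [h1.1, h1.2]

end Stmt5Aux

section Stmt5Aux2

open Filter

variable {ι : Type} {r : ι → ι → Prop}
variable {X : Type} [NormedAddCommGroup X] [NormedSpace ℝ X] {K : Set X}

/-- Lemma C: a bounded `d`-Cauchy net has a pointwise limit on `Q` given by an
element of the unit ball of the bidual (Banach–Alaoglu). -/
lemma exists_ptwise_limit (x : ι → Bidual X) (hne : Nonempty ι)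
    (ht : TransRel r) (hd : DirRel r) (hb : ∀ i, ‖x i‖ ≤ 1)
    (hc : DCauchyN r (ddist K) x) :
    ∃ l : Bidual X, ‖l‖ ≤ 1 ∧ ∀ φ ∈ posQ X K, TendstoRN r (fun i => x i φ) (l φ) := by
  haveI : Nonempty ι := hne
  set F : Filter ι := tailsF r with hF
  haveI hFne : F.NeBot := tailsF_neBot ht hd
  -- Banach–Alaoglu: cluster point of the net in the weak* topology
  set E := StrongDual ℝ X
  let y : ι → WeakDual ℝ E := fun i => StrongDual.toWeakDual (x i)
  have hmem : ∀ i, y i ∈ WeakDual.toStrongDual ⁻¹' Metric.closedBall 0 1 := fun i => by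
    exact (dist_zero_right (x i)).trans_le (hb i)
  have hle : Filter.map y F ≤ Filter.principal (WeakDual.toStrongDual ⁻¹' Metric.closedBall 0 1) := by
    rw [Filter.le_principal_iff, Filter.mem_map]
    exact Filter.univ_mem' hmem
  obtain ⟨w, hw, hcl⟩ := (WeakDual.isCompact_closedBall (𝕜 := ℝ) (E := E) 0 1) hle
  refine ⟨WeakDual.toStrongDual w, ?_, ?_⟩
  · simpa [Metric.mem_closedBall, dist_zero_right] using hw
  intro φ hφ
  set a : ι → ℝ := fun i => x i φ with ha
  -- boundedness
  have habs : ∀ i, |a i| ≤ 1 := fun i => by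
    have h1 : ‖x i φ‖ ≤ ‖x i‖ * ‖φ‖ := (x i).le_opNorm φ
    have h2 : ‖x i‖ * ‖φ‖ ≤ 1 * 1 :=
      mul_le_mul (hb i) hφ.1 (norm_nonneg _) zero_le_one
    calc |a i| = ‖x i φ‖ := (Real.norm_eq_abs _).symm
      _ ≤ 1 := by linarith
  have hbdd_le : F.IsBoundedUnder (· ≤ ·) a :=
    Filter.isBoundedUnder_of ⟨1, fun i => (abs_le.1 (habs i)).2⟩
  have hbdd_ge : F.IsBoundedUnder (· ≥ ·) a :=
    Filter.isBoundedUnder_of ⟨-1, fun i => (abs_le.1 (habs i)).1⟩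
  set L := Filter.liminf a F with hL
  -- the net converges along the tails filter to its liminf
  have key : ∀ ε : ℝ, 0 < ε → Filter.limsup a F ≤ L + ε := by
    intro ε hε
    obtain ⟨γ₀, h0⟩ := hc (ENNReal.ofReal ε) (ENNReal.ofReal_pos.2 hε)
    refine Filter.limsup_le_of_le hbdd_ge.isCoboundedUnder_le ?_
    rw [Filter.eventually_iff, hF, mem_tailsF ht hd]
    refine ⟨γ₀, fun γ hγ => ?_⟩
    have h1 : ∀ᶠ δ in F, a γ - ε ≤ a δ := by
      rw [Filter.eventually_iff, hF, mem_tailsF ht hd]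
      refine ⟨γ, fun δ hδ => ?_⟩
      have := apply_lt_of_ddist_lt hε (h0 γ δ hγ hδ) hφ
      simp only [Set.mem_setOf_eq, a]
      linarith
    have h2 : a γ - ε ≤ L := Filter.le_liminf_of_le hbdd_le.isCoboundedUnder_ge h1
    simp only [Set.mem_setOf_eq]
    linarith
  have hls : Filter.limsup a F ≤ L := by
    by_contra hcon
    push_neg at hcon
    have := key ((Filter.limsup a F - L) / 2) (by linarith)
    linarith
  have hten : Filter.Tendsto a F (nhds L) :=
    tendsto_of_le_liminf_of_limsup_le le_rfl hls hbdd_le hbdd_ge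
  -- the cluster point evaluates to the limit
  have hwL : w φ = L := by
    have hgc : Continuous fun ψ : WeakDual ℝ E => ψ φ := WeakDual.eval_continuous φ
    have hmapcl : ClusterPt (w φ) (Filter.map a F) := by
      refine ClusterPt.map (x := w) (f := fun ψ : WeakDual ℝ E => ψ φ) hcl hgc.continuousAt ?_
      have : (fun ψ : WeakDual ℝ E => ψ φ) ∘ y = a := rfl
      rw [← this, ← Filter.map_map]
      exact Filter.tendsto_map
    exact eq_of_nhds_neBot (hmapcl.mono hten)
  have hval : (WeakDual.toStrongDual w) φ = L := hwL
  rw [hval]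
  -- convert filter convergence to `TendstoRN`
  intro ε hε
  have h1 : ∀ᶠ i in F, dist (a i) L < ε := Metric.tendsto_nhds.1 hten ε hε
  rw [Filter.eventually_iff, hF, mem_tailsF ht hd] at h1
  obtain ⟨γ₀, h2⟩ := h1
  refine ⟨γ₀, fun γ hγ => ?_⟩
  have := h2 γ hγ
  simpa [Real.dist_eq] using this

/-- Lemma B: for a bounded `d`-Cauchy net, bi-convergence implies pointwise
convergence on `Q`. -/
lemma ptwise_of_biConv (x : ι → Bidual X) (l : Bidual X) (hne : Nonempty ι)
    (ht : TransRel r) (hd : DirRel r) (hb : ∀ i, ‖x i‖ ≤ 1)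
    (hc : DCauchyN r (ddist K) x) (hB : BiConvOn r (ddist K) Set.univ x l) :
    ∀ φ ∈ posQ X K, TendstoRN r (fun i => x i φ) (l φ) := by
  obtain ⟨l', -, hl'⟩ := exists_ptwise_limit (K := K) x hne ht hd hb hc
  -- (i): eventual upper bound x_α φ ≤ l φ + ε
  have upper : ∀ ε : ℝ, 0 < ε → ∃ γ₀, ∀ α, r γ₀ α →
      ∀ φ ∈ posQ X K, x α φ - l φ ≤ ε := by
    intro ε hε
    obtain ⟨γ₀, h0⟩ := hc (ENNReal.ofReal ε) (ENNReal.ofReal_pos.2 hε)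
    refine ⟨γ₀, fun α hα => ?_⟩
    have h1 : ddist K (x α) l ≤ ENNReal.ofReal ε := by
      refine le_trans (hB.2 (x α) (Set.mem_univ _)) (liminfN_le fun γ => ?_)
      obtain ⟨δ, hγδ, hαδ⟩ := hd γ α
      exact ⟨δ, hγδ, le_of_lt (h0 α δ hα hαδ)⟩
    intro φ hφ
    exact apply_le_of_ddist_le (le_of_lt hε) h1 hφ
  -- (ii): l φ ≤ l' φ for φ ∈ Q
  have hle : ∀ φ ∈ posQ X K, l φ ≤ l' φ := by
    intro φ hφ
    have h2 : ∀ ε : ℝ, 0 < ε → l φ - l' φ ≤ ε := by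
      intro ε hε
      obtain ⟨γ₀, h0⟩ := hc (ENNReal.ofReal (ε / 2)) (ENNReal.ofReal_pos.2 (by linarith))
      have hdll' : ddist K l l' ≤ ENNReal.ofReal ε := by
        refine le_trans (hB.1 l' (Set.mem_univ _)) (liminfN_le fun γ => ?_)
        obtain ⟨δ, hγδ, h0δ⟩ := hd γ γ₀
        refine ⟨δ, hγδ, ddist_le_ofReal fun ψ hψ => ?_⟩
        -- x δ ψ - l' ψ ≤ ε
        obtain ⟨γ₁, h1⟩ := hl' ψ hψ (ε / 2) (by linarith)
        obtain ⟨δ', hδδ', hγ₁δ'⟩ := hd δ γ₁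
        have ha : x δ ψ - x δ' ψ < ε / 2 := by
          have := apply_lt_of_ddist_lt (by linarith : (0:ℝ) < ε / 2)
            (h0 δ δ' h0δ hδδ') hψ
          linarith
        have hb' : |x δ' ψ - l' ψ| < ε / 2 := h1 δ' hγ₁δ'
        rw [abs_lt] at hb'
        simp only [ContinuousLinearMap.sub_apply]
        linarith [hb'.1, hb'.2]
      exact apply_le_of_ddist_le (le_of_lt hε) hdll' hφ
    by_contra hcon
    push_neg at hcon
    have := h2 ((l φ - l' φ) / 2) (by linarith)
    linarith
  -- l' φ ≤ l φ, hence equality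
  have heq : ∀ φ ∈ posQ X K, l φ = l' φ := by
    intro φ hφ
    refine le_antisymm (hle φ hφ) ?_
    have h2 : ∀ ε : ℝ, 0 < ε → l' φ - l φ ≤ 2 * ε := by
      intro ε hε
      obtain ⟨γ₀, h0⟩ := upper ε hε
      obtain ⟨γ₁, h1⟩ := hl' φ hφ ε hε
      obtain ⟨α, hα0, hα1⟩ := hd γ₀ γ₁
      have ha : x α φ - l φ ≤ ε := h0 α hα0 φ hφ
      have hb' : |x α φ - l' φ| < ε := h1 α hα1
      rw [abs_lt] at hb'
      linarith [hb'.1]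
    by_contra hcon
    push_neg at hcon
    have := h2 ((l' φ - l φ) / 4) (by linarith)
    linarith
  intro φ hφ
  rw [heq φ hφ]
  exact hl' φ hφ

end Stmt5Aux2


/-- the unit ball `X^{**1}` of the bidual is `d`-complete and, for a
`d`-Cauchy net `(x_λ)` in `X^{**1}` and `x ∈ X**`, `x_λ →^◦_◦ x` iff `x_λ(φ) → x(φ)`
for all `φ ∈ Q`. -/
theorem stmt5 (X : Type) [NormedAddCommGroup X] [NormedSpace ℝ X] [CompleteSpace X]
    (K : Set X) (hK : IsGoodCone X K) :
    (∀ (ι : Type) (r : ι → ι → Prop) (x : ι → Bidual X),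
      Nonempty ι → TransRel r → DirRel r → (∀ i, ‖x i‖ ≤ 1) →
      DCauchyN r (ddist K) x →
        ∃ l : Bidual X, ‖l‖ ≤ 1 ∧ BiConvOn r (ddist K) Set.univ x l) ∧
    (∀ (ι : Type) (r : ι → ι → Prop) (x : ι → Bidual X) (l : Bidual X),
      Nonempty ι → TransRel r → DirRel r → (∀ i, ‖x i‖ ≤ 1) →
      DCauchyN r (ddist K) x →
        (BiConvOn r (ddist K) Set.univ x l ↔
          ∀ φ ∈ posQ X K, TendstoRN r (fun i => x i φ) (l φ))) := by
  constructor
  · intro ι r x hne ht hd hb hc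
    obtain ⟨l, hl1, hl2⟩ := exists_ptwise_limit (K := K) x hne ht hd hb hc
    exact ⟨l, hl1, biConv_of_ptwise hl2⟩
  · intro ι r x l hne ht hd hb hc
    exact ⟨fun hB => ptwise_of_biConv x l hne ht hd hb hc hB,
      fun h => biConv_of_ptwise h⟩
end

section
/- Let X be a preordered Banach space. Then every x in the unit ball X^1 of X is d-finite in X^{S1}: whenever (y_λ) is a d-Cauchy net with terms in X^{S1} = X^S ∩ X^{**1} and y_λ →^◦_◦ y with y ∈ X^{S1} (holes tested against all points of X^{**}), we have d(x, y_λ) → d(x, y). -/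
open TopologicalSpace ENNReal

section Aux

open Filter

/-- liminf is at most limsup over a directed index. -/
theorem aux_liminfN_le_limsupN {ι : Type} {r : ι → ι → Prop} (hdir : DirRel r)
    (a : ι → ℝ≥0∞) : liminfN r a ≤ limsupN r a := by
  refine iSup_le fun γ => le_iInf fun ν => ?_
  obtain ⟨e, hγe, hνe⟩ := hdir γ ν
  calc (⨅ δ, ⨅ _ : r γ δ, a δ) ≤ a e := iInf₂_le e hγe
    _ ≤ ⨆ δ, ⨆ _ : r ν δ, a δ := le_iSup₂ (f := fun δ (_ : r ν δ) => a δ) e hνe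

/-- There is an ultrafilter containing all tails of a nonempty directed transitive
relation. -/
theorem aux_exists_tail_ultrafilter {ι : Type} {r : ι → ι → Prop} (hne : Nonempty ι)
    (htr : TransRel r) (hdir : DirRel r) :
    ∃ 𝒰 : Ultrafilter ι, ∀ γ, {δ | r γ δ} ∈ 𝒰 := by
  have hdir' : Directed (· ≥ ·) fun γ : ι => Filter.principal {δ | r γ δ} := by
    intro γ₁ γ₂
    obtain ⟨e, h1, h2⟩ := hdir γ₁ γ₂
    exact ⟨e, Filter.principal_mono.2 fun δ hδ => htr _ _ _ h1 hδ,
      Filter.principal_mono.2 fun δ hδ => htr _ _ _ h2 hδ⟩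
  have hnb : ∀ γ : ι, Filter.NeBot (Filter.principal {δ | r γ δ}) := by
    intro γ
    obtain ⟨e, he, -⟩ := hdir γ γ
    exact Filter.principal_neBot_iff.2 ⟨e, he⟩
  have : Filter.NeBot (⨅ γ, Filter.principal {δ | r γ δ}) :=
    Filter.iInf_neBot_of_directed hdir' hnb
  obtain ⟨𝒰, h𝒰⟩ := Ultrafilter.exists_le (⨅ γ, Filter.principal {δ | r γ δ})
  exact ⟨𝒰, fun γ => h𝒰 (Filter.mem_iInf_of_mem γ (Filter.mem_principal_self _))⟩

/-- An ultrafilter limit of a uniformly norm-bounded family of functionals. -/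
theorem aux_ulim {α : Type} [NormedAddCommGroup α] [NormedSpace ℝ α] {ι : Type}
    (𝒰 : Ultrafilter ι) (g : ι → StrongDual ℝ α) (hb : ∀ i, ‖g i‖ ≤ 1) :
    ∃ c : StrongDual ℝ α, ‖c‖ ≤ 1 ∧
      ∀ v, Filter.Tendsto (fun i => g i v) (𝒰 : Filter ι) (nhds (c v)) := by
  have hbd : ∀ (i : ι) (v : α), |g i v| ≤ ‖v‖ := by
    intro i v
    rw [← Real.norm_eq_abs]
    calc ‖g i v‖ ≤ ‖g i‖ * ‖v‖ := (g i).le_opNorm v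
      _ ≤ 1 * ‖v‖ := by have := norm_nonneg v; nlinarith [hb i]
      _ = ‖v‖ := one_mul _
  have hlim : ∀ v : α, ∃ L : ℝ, Filter.Tendsto (fun i => g i v) (𝒰 : Filter ι) (nhds L) := by
    intro v
    have hc : IsCompact (Set.Icc (-‖v‖) ‖v‖) := isCompact_Icc
    have hle : (Ultrafilter.map (fun i => g i v) 𝒰 : Filter ℝ)
        ≤ Filter.principal (Set.Icc (-‖v‖) ‖v‖) := by
      refine Filter.le_principal_iff.2 ?_
      rw [Ultrafilter.coe_map, Filter.mem_map]
      refine Filter.univ_mem' fun i => ?_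
      have := abs_le.1 (hbd i v)
      exact ⟨this.1, this.2⟩
    obtain ⟨L, -, hL⟩ := hc.ultrafilter_le_nhds (Ultrafilter.map (fun i => g i v) 𝒰) hle
    exact ⟨L, hL⟩
  choose L hL using hlim
  have hadd : ∀ v w : α, L (v + w) = L v + L w := by
    intro v w
    refine tendsto_nhds_unique ?_ ((hL v).add (hL w))
    have : (fun i => g i (v + w)) = fun i => g i v + g i w := by
      funext i; exact map_add (g i) v w
    rw [← this]; exact hL (v + w)
  have hsmul : ∀ (t : ℝ) (v : α), L (t • v) = t * L v := by
    intro t v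
    refine tendsto_nhds_unique ?_ ((hL v).const_mul t)
    have : (fun i => g i (t • v)) = fun i => t * g i v := by
      funext i; rw [map_smul]; simp [smul_eq_mul]
    rw [← this]; exact hL (t • v)
  let lm : α →ₗ[ℝ] ℝ :=
    { toFun := L
      map_add' := hadd
      map_smul' := fun t v => by simpa using hsmul t v }
  have hbound : ∀ v : α, ‖lm v‖ ≤ 1 * ‖v‖ := by
    intro v
    rw [Real.norm_eq_abs, one_mul]
    have habs : Filter.Tendsto (fun i => |g i v|) (𝒰 : Filter ι) (nhds |L v|) := (hL v).abs
    exact le_of_tendsto habs (Filter.Eventually.of_forall fun i => hbd i v)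
  refine ⟨LinearMap.mkContinuous lm 1 hbound,
    LinearMap.mkContinuous_norm_le lm zero_le_one hbound, fun v => hL v⟩

end Aux

/-- every `x` in the unit ball of `X` is `d`-finite in `X^{S1}`:
`d(x, y_λ) → d(x, y)` whenever `(y_λ)` is a `d`-Cauchy net in `X^{S1}` with
`y_λ →^◦_◦ y ∈ X^{S1}`. -/
theorem stmt8 (X : Type) [NormedAddCommGroup X] [NormedSpace ℝ X] [CompleteSpace X]
    (K : Set X) (hK : IsGoodCone X K)
    (x : X) (hx : ‖x‖ ≤ 1)
    (ι : Type) (r : ι → ι → Prop) (y : ι → Bidual X) (l : Bidual X)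
    (hne : Nonempty ι) (htr : TransRel r) (hdir : DirRel r)
    (hy : ∀ i, lscS K (y i) ∧ ‖y i‖ ≤ 1)
    (hC : DCauchyN r (ddist K) y)
    (hconv : BiConvOn r (ddist K) Set.univ y l)
    (hl : lscS K l ∧ ‖l‖ ≤ 1) :
    TendstoN r (fun i => ddist K (NormedSpace.inclusionInDoubleDual ℝ X x) (y i))
      (ddist K (NormedSpace.inclusionInDoubleDual ℝ X x) l) := by
  classical
  set xh : Bidual X := NormedSpace.inclusionInDoubleDual ℝ X x with hxh
  set a : ι → ℝ≥0∞ := fun i => ddist K xh (y i) with ha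
  set M : ℝ≥0∞ := ddist K xh l with hMdef
  have hxh_apply : ∀ φ : StrongDual ℝ X, xh φ = φ x := fun φ =>
    NormedSpace.dual_def ℝ X x φ
  have hxh_norm : ‖xh‖ ≤ 1 := le_trans (NormedSpace.double_dual_bound ℝ X x) hx
  -- a generic bound for terms of the supremum defining `ddist`
  have hterm_le : ∀ (u w : Bidual X) (φ : StrongDual ℝ X), φ ∈ posQ X K →
      ENNReal.ofReal ((u - w) φ) ≤ ddist K u w := by
    intro u w φ hφ
    exact le_iSup₂ (f := fun φ (_ : φ ∈ posQ X K) => ENNReal.ofReal ((u - w) φ)) φ hφ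
  -- the distance between unit-ball points is at most 2
  have hdd_le : ∀ u w : Bidual X, ‖u‖ ≤ 1 → ‖w‖ ≤ 1 → ddist K u w ≤ ENNReal.ofReal 2 := by
    intro u w hu hw
    refine iSup₂_le fun φ hφ => ENNReal.ofReal_le_ofReal ?_
    have h2 : ‖u - w‖ ≤ 2 := le_trans (norm_sub_le u w) (by linarith)
    have habs : |(u - w) φ| ≤ 2 := by
      rw [← Real.norm_eq_abs]
      calc ‖(u - w) φ‖ ≤ ‖u - w‖ * ‖φ‖ := (u - w).le_opNorm φ
        _ ≤ 2 := by nlinarith [norm_nonneg (u - w), norm_nonneg φ, hφ.1]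
    linarith [(abs_le.1 habs).2]
  have hMfin : M ≠ ⊤ :=
    (lt_of_le_of_lt (hdd_le xh l hxh_norm hl.2) ENNReal.ofReal_lt_top).ne
  set m : ℝ := M.toReal with hmdef
  have hm0 : 0 ≤ m := ENNReal.toReal_nonneg
  have hMm : ENNReal.ofReal m = M := ENNReal.ofReal_toReal hMfin
  -- pointwise bound from the definition of `M`
  have hxl : ∀ φ : StrongDual ℝ X, φ ∈ posQ X K → φ x - l φ ≤ m := by
    intro φ hφ
    have h1 : ENNReal.ofReal ((xh - l) φ) ≤ M := hterm_le xh l φ hφ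
    have h2 : (xh - l) φ = φ x - l φ := by
      rw [ContinuousLinearMap.sub_apply, hxh_apply]
    rw [h2, ← hMm] at h1
    by_cases hs : φ x - l φ ≤ 0
    · linarith
    · exact (ENNReal.ofReal_le_ofReal_iff hm0).1 h1
  -- KEY CLAIM: the limsup is at most `m + 5ε` for every `ε > 0`
  have key : ∀ ε : ℝ, 0 < ε → limsupN r a ≤ ENNReal.ofReal (m + 5 * ε) := by
    intro ε hε
    by_contra hcon
    push_neg at hcon
    obtain ⟨γ₀, hγ₀⟩ := hC (ENNReal.ofReal ε) (ENNReal.ofReal_pos.2 hε)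
    obtain ⟨𝒰, h𝒰⟩ := aux_exists_tail_ultrafilter hne htr hdir
    -- a helper converting `ofReal < ofReal` to a real inequality
    have hofr : ∀ p q : ℝ, 0 < q → ENNReal.ofReal p < ENNReal.ofReal q → p < q := by
      intro p q hq h
      exact (ENNReal.ofReal_lt_ofReal_iff hq).1 h
    -- select, beyond each index, a later index and functional with a large deficit
    have hsel : ∀ μ : ι, ∃ δ, r μ δ ∧ ∃ φ : StrongDual ℝ X,
        φ ∈ posQ X K ∧ m + 5 * ε < (xh - y δ) φ := by
      intro μ
      have h1 : ENNReal.ofReal (m + 5 * ε) < ⨆ δ, ⨆ _ : r μ δ, a δ :=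
        lt_of_lt_of_le hcon (iInf_le _ μ)
      rw [lt_iSup_iff] at h1
      obtain ⟨δ, h1⟩ := h1
      rw [lt_iSup_iff] at h1
      obtain ⟨hμδ, h1⟩ := h1
      have h2 : ENNReal.ofReal (m + 5 * ε)
          < ⨆ φ, ⨆ _ : φ ∈ posQ X K, ENNReal.ofReal ((xh - y δ) φ) := h1
      rw [lt_iSup_iff] at h2
      obtain ⟨φ, h2⟩ := h2
      rw [lt_iSup_iff] at h2
      obtain ⟨hφ, h2⟩ := h2
      refine ⟨δ, hμδ, φ, hφ, ?_⟩
      by_contra hle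
      push_neg at hle
      exact absurd (ENNReal.ofReal_le_ofReal hle) (not_le.2 h2)
    choose δf hδf φf hφmem hφded using hsel
    -- Claim A: persistent deficits along the tail of `γ₀`
    have hA : ∀ ν, r γ₀ ν → ∀ μ, r ν μ → m + 4 * ε < φf μ x - y ν (φf μ) := by
      intro ν hν μ hνμ
      have hνδ : r ν (δf μ) := htr _ _ _ hνμ (hδf μ)
      have hc := hγ₀ ν (δf μ) hν hνδ
      have hB : (y ν - y (δf μ)) (φf μ) < ε :=
        hofr _ _ hε (lt_of_le_of_lt (hterm_le (y ν) (y (δf μ)) (φf μ) (hφmem μ)) hc)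
      have hAA := hφded μ
      have e1 : (xh - y (δf μ)) (φf μ) = φf μ x - y (δf μ) (φf μ) := by
        rw [ContinuousLinearMap.sub_apply, hxh_apply]
      have e2 : (y ν - y (δf μ)) (φf μ) = y ν (φf μ) - y (δf μ) (φf μ) := by
        rw [ContinuousLinearMap.sub_apply]
      rw [e1] at hAA
      rw [e2] at hB
      linarith
    -- the ultrafilter limit ψ of the functionals φf
    obtain ⟨ψ, hψnorm, hψlim⟩ := aux_ulim 𝒰 φf fun μ => (hφmem μ).1
    have hψQ : ψ ∈ posQ X K := by
      refine ⟨hψnorm, fun v hv => ?_⟩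
      exact ge_of_tendsto (hψlim v)
        (Filter.Eventually.of_forall fun μ => (hφmem μ).2 v hv)
    -- the net of functionals converges to ψ in the topology of Q
    have htend : Filter.Tendsto (fun μ => (⟨φf μ, hφmem μ⟩ : posQ X K)) (𝒰 : Filter ι)
        (@nhds _ (qTop X K) ⟨ψ, hψQ⟩) := by
      have hn : @nhds _ (qTop X K) (⟨ψ, hψQ⟩ : posQ X K)
          = Filter.comap (fun φ : posQ X K => fun v : X => φ.1 v)
              (nhds (fun v : X => ψ v)) :=
        nhds_induced (T := inferInstance) (fun φ : posQ X K => fun v : X => φ.1 v)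
          (⟨ψ, hψQ⟩ : posQ X K)
      rw [hn, Filter.tendsto_comap_iff]
      rw [tendsto_pi_nhds]
      intro v
      exact hψlim v
    -- Claim B: deficit of the values at ψ, for every tail index
    have hB : ∀ ν, r γ₀ ν → y ν ψ ≤ ψ x - (m + 4 * ε) := by
      intro ν hν
      by_contra hgt
      push_neg at hgt
      have hlsc := (hy ν).1
      set t : ℝ := (ψ x - (m + 4 * ε) + y ν ψ) / 2 with htdef
      have h1 : t < y ν ψ := by rw [htdef]; linarith
      have hev1 : ∀ᶠ μ in (𝒰 : Filter ι), t < y ν (φf μ) :=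
        htend.eventually (hlsc ⟨ψ, hψQ⟩ t h1)
      have hev2 : ∀ᶠ μ in (𝒰 : Filter ι), φf μ x - (m + 4 * ε) < t := by
        have ht2 : Filter.Tendsto (fun μ => φf μ x - (m + 4 * ε)) (𝒰 : Filter ι)
            (nhds (ψ x - (m + 4 * ε))) := (hψlim x).sub_const _
        exact ht2.eventually_lt_const (by rw [htdef]; linarith)
      have hev3 : ∀ᶠ μ in (𝒰 : Filter ι), y ν (φf μ) < φf μ x - (m + 4 * ε) := by
        filter_upwards [h𝒰 ν] with μ hμ
        linarith [hA ν hν μ hμ]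
      obtain ⟨μ, h1', h2', h3'⟩ := (hev1.and (hev2.and hev3)).exists
      linarith
    -- the ultrafilter limit c of the net (y ν)
    obtain ⟨c, hcnorm, hclim⟩ := aux_ulim 𝒰 y fun i => (hy i).2
    have hcψ : c ψ ≤ ψ x - (m + 4 * ε) := by
      refine le_of_tendsto (hclim ψ) ?_
      filter_upwards [h𝒰 γ₀] with ν hν using hB ν hν
    have hlψ : ψ x - m ≤ l ψ := by linarith [hxl ψ hψQ]
    -- Claim C: the tail of the net is within ε of c (forward distance)
    have hCc : ∀ ν, r γ₀ ν → ddist K (y ν) c ≤ ENNReal.ofReal ε := by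
      intro ν hν
      refine iSup₂_le fun φ hφ => ?_
      have hpt : ∀ μ, r ν μ → y ν φ - y μ φ < ε := by
        intro μ hμ
        have hd := hγ₀ ν μ hν hμ
        have h3 := hofr _ _ hε (lt_of_le_of_lt (hterm_le (y ν) (y μ) φ hφ) hd)
        rw [ContinuousLinearMap.sub_apply] at h3
        exact h3
      have hyc : y ν φ - ε ≤ c φ := by
        refine ge_of_tendsto (hclim φ) ?_
        filter_upwards [h𝒰 ν] with μ hμ
        linarith [hpt μ hμ]
      refine ENNReal.ofReal_le_ofReal ?_
      rw [ContinuousLinearMap.sub_apply]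
      linarith
    -- hence the liminf of forward distances to c is at most ε
    have hliminf : (liminfN r fun ν => ddist K (y ν) c) ≤ ENNReal.ofReal ε := by
      refine iSup_le fun γ => ?_
      obtain ⟨e, hγe, h0e⟩ := hdir γ γ₀
      exact le_trans (iInf₂_le e hγe) (hCc e h0e)
    have hup := hconv.1 c (Set.mem_univ c)
    have hlow : ENNReal.ofReal (4 * ε) ≤ ddist K l c := by
      refine le_trans (ENNReal.ofReal_le_ofReal ?_) (hterm_le l c ψ hψQ)
      rw [ContinuousLinearMap.sub_apply]
      linarith
    have hfinal : ENNReal.ofReal (4 * ε) ≤ ENNReal.ofReal ε :=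
      le_trans hlow (le_trans hup hliminf)
    have := (ENNReal.ofReal_le_ofReal_iff (le_of_lt hε)).1 hfinal
    linarith
  -- conclude: limsup ≤ M
  have hlimsup_le : limsupN r a ≤ M := by
    by_contra hcon
    push_neg at hcon
    have hfin : limsupN r a ≤ ENNReal.ofReal 2 := by
      obtain ⟨i⟩ := hne
      exact le_trans (iInf_le _ i)
        (iSup₂_le fun δ _ => hdd_le xh (y δ) hxh_norm (hy δ).2)
    have hLt : limsupN r a ≠ ⊤ := (lt_of_le_of_lt hfin ENNReal.ofReal_lt_top).ne
    have hmL : m < (limsupN r a).toReal := (ENNReal.toReal_lt_toReal hMfin hLt).2 hcon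
    set ε : ℝ := ((limsupN r a).toReal - m) / 10 with hεdef
    have hε : 0 < ε := by rw [hεdef]; linarith
    have h1 := key ε hε
    have h2 : ENNReal.ofReal (m + 5 * ε) < limsupN r a := by
      rw [← ENNReal.ofReal_toReal hLt]
      refine (ENNReal.ofReal_lt_ofReal_iff_of_nonneg (by positivity)).2 ?_
      rw [hεdef]; linarith
    exact absurd h1 (not_le.2 h2)
  have hliminf_ge : M ≤ liminfN r a := hconv.2 xh (Set.mem_univ xh)
  have hll := aux_liminfN_le_limsupN hdir a
  exact ⟨le_antisymm (le_trans hll hlimsup_le) hliminf_ge,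
    le_antisymm hlimsup_le (le_trans hliminf_ge hll)⟩
end
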